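/- Let m and n be positive integers and let ℓ be an integer with 0 ≤ ℓ ≤ 3. Then every ℓ-leaky fort of the Hopi rectangle graph HD(m,n) contains at least one vertex v with deg(v) = 2. -/

import Mathlib

/-- An `ℓ`-leaky fort: a nonempty set `S` such that at most `ℓ` vertices
outside of `S` have exactly one neighbor in `S`. -/
def IsLeakyFort {V : Type*} (G : SimpleGraph V) (ℓ : ℕ) (S : Set V) : Prop :=
  S.Nonempty ∧ {v | v ∉ S ∧ (G.neighborSet v ∩ S).ncard = 1}.ncard ≤ ℓ

/-- The vertex set of the Hopi rectangle graph of order `(m,n)`: the set of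
integer lattice points `(i,j)` with `m-1 ≤ i+j ≤ 2n+m-1` and `|i-j| ≤ m`
(realized as a `Finset` by filtering a sufficiently large box). -/
noncomputable def HDverts (m n : ℕ) : Finset (ℤ × ℤ) :=
  (Finset.Icc (-2 : ℤ) (2*n + 2*m) ×ˢ Finset.Icc (-2 : ℤ) (2*n + 2*m)).filter
    (fun p => (m : ℤ) - 1 ≤ p.1 + p.2 ∧ p.1 + p.2 ≤ 2*n + m - 1 ∧ |p.1 - p.2| ≤ m)

/-- The Hopi rectangle graph `HD(m,n)`: vertices are the points of `HDverts m n`,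
and `(i,j)` is adjacent to `(i',j')` iff `|i - i'| + |j - j'| = 1`. -/
def HD (m n : ℕ) : SimpleGraph {p : ℤ × ℤ // p ∈ HDverts m n} where
  Adj u v := |u.val.1 - v.val.1| + |u.val.2 - v.val.2| = 1
  symm := by
    constructor
    intro u v h
    rw [abs_sub_comm v.val.1 u.val.1, abs_sub_comm v.val.2 u.val.2]
    exact h
  loopless := by constructor; intro u h; simp at h

lemma mem_HDverts {m n : ℕ} {p : ℤ × ℤ} : p ∈ HDverts m n ↔
    (m:ℤ) - 1 ≤ p.1 + p.2 ∧ p.1 + p.2 ≤ 2*n + m - 1 ∧ -(m:ℤ) ≤ p.1 - p.2 ∧ p.1 - p.2 ≤ m := by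
  simp only [HDverts, Finset.mem_filter, Finset.mem_product, Finset.mem_Icc, abs_le]
  constructor <;> intro h <;> [skip; constructor] <;> omega

lemma HD_adj_iff {m n : ℕ} (v u : {p : ℤ × ℤ // p ∈ HDverts m n}) :
    (HD m n).Adj v u ↔ u.val = (v.val.1 + 1, v.val.2) ∨ u.val = (v.val.1 - 1, v.val.2)
      ∨ u.val = (v.val.1, v.val.2 + 1) ∨ u.val = (v.val.1, v.val.2 - 1) := by
  show |v.val.1 - u.val.1| + |v.val.2 - u.val.2| = 1 ↔ _
  simp only [Prod.ext_iff]
  rcases abs_cases (v.val.1 - u.val.1) with ⟨h1,_⟩|⟨h1,_⟩ <;>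
    rcases abs_cases (v.val.2 - u.val.2) with ⟨h2,_⟩|⟨h2,_⟩ <;> rw [h1, h2] <;> omega

lemma deg2_of {m n : ℕ} (v a b : {p : ℤ × ℤ // p ∈ HDverts m n}) (hab : a ≠ b)
    (h : ∀ u, (HD m n).Adj v u ↔ u = a ∨ u = b) :
    ((HD m n).neighborSet v).ncard = 2 := by
  have : (HD m n).neighborSet v = {a, b} := Set.ext fun u => (h u)
  rw [this, Set.ncard_pair hab]

lemma deg_boundary {m n : ℕ} (hm : 0 < m) (hn : 0 < n) (v : {p : ℤ × ℤ // p ∈ HDverts m n})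
    (h : v.val.1 + v.val.2 = (m:ℤ) - 1 ∨ v.val.1 + v.val.2 = 2*n + m - 1 ∨
         v.val.1 - v.val.2 = (m:ℤ) ∨ v.val.1 - v.val.2 = -(m:ℤ)) :
    ((HD m n).neighborSet v).ncard = 2 := by
  obtain ⟨s1, s2, d1, d2⟩ := mem_HDverts.1 v.2
  rcases h with h | h | h | h
  · -- bottom: neighbors (i+1,j) and (i,j+1)
    refine deg2_of v ⟨(v.val.1 + 1, v.val.2), mem_HDverts.2 (by omega)⟩
      ⟨(v.val.1, v.val.2 + 1), mem_HDverts.2 (by omega)⟩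
      (by simp [Subtype.ext_iff, Prod.ext_iff]) (fun u => ?_)
    rw [HD_adj_iff]
    simp only [Subtype.ext_iff]
    constructor
    · rintro (h1 | h1 | h1 | h1)
      · exact Or.inl h1
      · exfalso; have := mem_HDverts.1 u.2; rw [h1] at this; simp at this; omega
      · exact Or.inr h1
      · exfalso; have := mem_HDverts.1 u.2; rw [h1] at this; simp at this; omega
    · rintro (h1 | h1)
      · exact Or.inl h1
      · exact Or.inr (Or.inr (Or.inl h1))
  · -- top: neighbors (i-1,j) and (i,j-1)
    refine deg2_of v ⟨(v.val.1 - 1, v.val.2), mem_HDverts.2 (by omega)⟩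
      ⟨(v.val.1, v.val.2 - 1), mem_HDverts.2 (by omega)⟩
      (by simp [Subtype.ext_iff, Prod.ext_iff]) (fun u => ?_)
    rw [HD_adj_iff]
    simp only [Subtype.ext_iff]
    constructor
    · rintro (h1 | h1 | h1 | h1)
      · exfalso; have := mem_HDverts.1 u.2; rw [h1] at this; simp at this; omega
      · exact Or.inl h1
      · exfalso; have := mem_HDverts.1 u.2; rw [h1] at this; simp at this; omega
      · exact Or.inr h1
    · rintro (h1 | h1)
      · exact Or.inr (Or.inl h1)
      · exact Or.inr (Or.inr (Or.inr h1))
  · -- right side diff = m: neighbors (i-1,j) and (i,j+1)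
    refine deg2_of v ⟨(v.val.1 - 1, v.val.2), mem_HDverts.2 (by omega)⟩
      ⟨(v.val.1, v.val.2 + 1), mem_HDverts.2 (by omega)⟩
      (by simp [Subtype.ext_iff, Prod.ext_iff]) (fun u => ?_)
    rw [HD_adj_iff]
    simp only [Subtype.ext_iff]
    constructor
    · rintro (h1 | h1 | h1 | h1)
      · exfalso; have := mem_HDverts.1 u.2; rw [h1] at this; simp at this; omega
      · exact Or.inl h1
      · exact Or.inr h1
      · exfalso; have := mem_HDverts.1 u.2; rw [h1] at this; simp at this; omega
    · rintro (h1 | h1)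
      · exact Or.inr (Or.inl h1)
      · exact Or.inr (Or.inr (Or.inl h1))
  · -- left side diff = -m: neighbors (i+1,j) and (i,j-1)
    refine deg2_of v ⟨(v.val.1 + 1, v.val.2), mem_HDverts.2 (by omega)⟩
      ⟨(v.val.1, v.val.2 - 1), mem_HDverts.2 (by omega)⟩
      (by simp [Subtype.ext_iff, Prod.ext_iff]) (fun u => ?_)
    rw [HD_adj_iff]
    simp only [Subtype.ext_iff]
    constructor
    · rintro (h1 | h1 | h1 | h1)
      · exact Or.inl h1
      · exfalso; have := mem_HDverts.1 u.2; rw [h1] at this; simp at this; omega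
      · exfalso; have := mem_HDverts.1 u.2; rw [h1] at this; simp at this; omega
      · exact Or.inr h1
    · rintro (h1 | h1)
      · exact Or.inl h1
      · exact Or.inr (Or.inr (Or.inr h1))

lemma leak_gen {m n : ℕ} {S : Set {p : ℤ × ℤ // p ∈ HDverts m n}}
    {v : {p : ℤ × ℤ // p ∈ HDverts m n}} (hv : v ∈ S) (e : ℤ × ℤ)
    (he : e = (1,0) ∨ e = (-1,0) ∨ e = (0,1) ∨ e = (0,-1))
    (hmax : ∀ u ∈ S, e.1 * u.val.1 + e.2 * u.val.2 ≤ e.1 * v.val.1 + e.2 * v.val.2)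
    (hw : ((v.val.1 + e.1, v.val.2 + e.2) : ℤ × ℤ) ∈ HDverts m n) :
    (⟨(v.val.1 + e.1, v.val.2 + e.2), hw⟩ : {p : ℤ × ℤ // p ∈ HDverts m n}) ∉ S ∧
    (HD m n).neighborSet ⟨(v.val.1 + e.1, v.val.2 + e.2), hw⟩ ∩ S = {v} := by
  constructor
  · intro hmem
    have := hmax _ hmem
    rcases he with rfl|rfl|rfl|rfl <;> simp at this
  · ext u
    simp only [Set.mem_inter_iff, SimpleGraph.mem_neighborSet, Set.mem_singleton_iff]
    constructor
    · rintro ⟨hadj, huS⟩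
      have hb := hmax u huS
      have hbv := hmax v hv
      rw [HD_adj_iff] at hadj
      apply Subtype.ext
      rcases he with rfl|rfl|rfl|rfl <;> simp only [Prod.ext_iff] at hadj ⊢ <;>
        simp only [one_mul, zero_mul, neg_mul, add_zero, zero_add] at hb <;>
        rcases hadj with ⟨h1,h2⟩|⟨h1,h2⟩|⟨h1,h2⟩|⟨h1,h2⟩ <;> simp only [h1, h2] at hb ⊢ <;>
        constructor <;> omega
    · rintro rfl
      refine ⟨?_, hv⟩
      rw [HD_adj_iff]
      rcases he with rfl|rfl|rfl|rfl <;> simp [Prod.ext_iff]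

/-- For `0 ≤ ℓ ≤ 3`, every `ℓ`-leaky fort of `HD(m,n)` contains a vertex of
degree `2`. -/
theorem HD_fort_contains_degree_two (m n : ℕ) (hm : 0 < m) (hn : 0 < n)
    (ℓ : ℕ) (hℓ : ℓ ≤ 3) (S : Set {p : ℤ × ℤ // p ∈ HDverts m n})
    (hS : IsLeakyFort (HD m n) ℓ S) :
    ∃ v ∈ S, ((HD m n).neighborSet v).ncard = 2 := by
  obtain ⟨hne, hleak⟩ := hS
  by_cases hb : ∃ v ∈ S, v.val.1 + v.val.2 = (m:ℤ) - 1 ∨ v.val.1 + v.val.2 = 2*n + m - 1 ∨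
      v.val.1 - v.val.2 = (m:ℤ) ∨ v.val.1 - v.val.2 = -(m:ℤ)
  · obtain ⟨v, hv, h⟩ := hb
    exact ⟨v, hv, deg_boundary hm hn v h⟩
  exfalso
  push_neg at hb
  -- interior bounds for members of S
  have hint : ∀ v ∈ S, (m:ℤ) ≤ v.val.1 + v.val.2 ∧ v.val.1 + v.val.2 ≤ 2*n + m - 2 ∧
      -(m:ℤ) + 1 ≤ v.val.1 - v.val.2 ∧ v.val.1 - v.val.2 ≤ (m:ℤ) - 1 := by
    intro v hv
    obtain ⟨s1, s2, d1, d2⟩ := mem_HDverts.1 v.2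
    obtain ⟨e1, e2, e3, e4⟩ := hb v hv
    omega
  have hfin : S.Finite := Set.toFinite S
  have hSf : hfin.toFinset.Nonempty := by rwa [Set.Finite.toFinset_nonempty]
  obtain ⟨v1, hv1, h1⟩ := hfin.toFinset.exists_max_image (fun u => u.val.1) hSf
  obtain ⟨v2, hv2, h2⟩ := hfin.toFinset.exists_min_image (fun u => u.val.1) hSf
  obtain ⟨v3, hv3, h3⟩ := hfin.toFinset.exists_max_image (fun u => u.val.2) hSf
  obtain ⟨v4, hv4, h4⟩ := hfin.toFinset.exists_min_image (fun u => u.val.2) hSf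
  rw [Set.Finite.mem_toFinset] at hv1 hv2 hv3 hv4
  have h1' : ∀ u ∈ S, u.val.1 ≤ v1.val.1 := fun u hu => h1 u (hfin.mem_toFinset.2 hu)
  have h2' : ∀ u ∈ S, v2.val.1 ≤ u.val.1 := fun u hu => h2 u (hfin.mem_toFinset.2 hu)
  have h3' : ∀ u ∈ S, u.val.2 ≤ v3.val.2 := fun u hu => h3 u (hfin.mem_toFinset.2 hu)
  have h4' : ∀ u ∈ S, v4.val.2 ≤ u.val.2 := fun u hu => h4 u (hfin.mem_toFinset.2 hu)
  have hw1 : ((v1.val.1 + 1, v1.val.2 + 0) : ℤ × ℤ) ∈ HDverts m n := by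
    have := hint v1 hv1; exact mem_HDverts.2 (by dsimp only; omega)
  have hw2 : ((v2.val.1 + -1, v2.val.2 + 0) : ℤ × ℤ) ∈ HDverts m n := by
    have := hint v2 hv2; exact mem_HDverts.2 (by dsimp only; omega)
  have hw3 : ((v3.val.1 + 0, v3.val.2 + 1) : ℤ × ℤ) ∈ HDverts m n := by
    have := hint v3 hv3; exact mem_HDverts.2 (by dsimp only; omega)
  have hw4 : ((v4.val.1 + 0, v4.val.2 + -1) : ℤ × ℤ) ∈ HDverts m n := by
    have := hint v4 hv4; exact mem_HDverts.2 (by dsimp only; omega)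
  have L1 := leak_gen hv1 (1,0) (Or.inl rfl) (by intro u hu; simpa using h1' u hu) hw1
  have L2 := leak_gen hv2 (-1,0) (Or.inr (Or.inl rfl)) (by intro u hu; simpa using h2' u hu) hw2
  have L3 := leak_gen hv3 (0,1) (Or.inr (Or.inr (Or.inl rfl))) (by intro u hu; simpa using h3' u hu) hw3
  have L4 := leak_gen hv4 (0,-1) (Or.inr (Or.inr (Or.inr rfl))) (by intro u hu; simpa using h4' u hu) hw4
  set w1 : {p : ℤ × ℤ // p ∈ HDverts m n} := ⟨(v1.val.1 + 1, v1.val.2 + 0), hw1⟩ with hw1def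
  set w2 : {p : ℤ × ℤ // p ∈ HDverts m n} := ⟨(v2.val.1 + -1, v2.val.2 + 0), hw2⟩ with hw2def
  set w3 : {p : ℤ × ℤ // p ∈ HDverts m n} := ⟨(v3.val.1 + 0, v3.val.2 + 1), hw3⟩ with hw3def
  set w4 : {p : ℤ × ℤ // p ∈ HDverts m n} := ⟨(v4.val.1 + 0, v4.val.2 + -1), hw4⟩ with hw4def
  -- pairwise distinct
  have a12 : v2.val.1 ≤ v1.val.1 := h1' v2 hv2
  have a13 : v3.val.1 ≤ v1.val.1 := h1' v3 hv3
  have a14 : v4.val.1 ≤ v1.val.1 := h1' v4 hv4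
  have a23 : v2.val.1 ≤ v3.val.1 := h2' v3 hv3
  have a24 : v2.val.1 ≤ v4.val.1 := h2' v4 hv4
  have b34 : v4.val.2 ≤ v3.val.2 := h4' v3 hv3
  have hne12 : w1 ≠ w2 := by simp only [hw1def, hw2def, Ne, Subtype.mk.injEq, Prod.mk.injEq]; omega
  have hne13 : w1 ≠ w3 := by simp only [hw1def, hw3def, Ne, Subtype.mk.injEq, Prod.mk.injEq]; omega
  have hne14 : w1 ≠ w4 := by simp only [hw1def, hw4def, Ne, Subtype.mk.injEq, Prod.mk.injEq]; omega
  have hne23 : w2 ≠ w3 := by simp only [hw2def, hw3def, Ne, Subtype.mk.injEq, Prod.mk.injEq]; omega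
  have hne24 : w2 ≠ w4 := by simp only [hw2def, hw4def, Ne, Subtype.mk.injEq, Prod.mk.injEq]; omega
  have hne34 : w3 ≠ w4 := by simp only [hw3def, hw4def, Ne, Subtype.mk.injEq, Prod.mk.injEq]; omega
  have hsub : ({w1, w2, w3, w4} : Set _) ⊆
      {v | v ∉ S ∧ ((HD m n).neighborSet v ∩ S).ncard = 1} := by
    rintro w (rfl | rfl | rfl | rfl)
    · exact ⟨L1.1, by rw [L1.2]; exact Set.ncard_singleton v1⟩
    · exact ⟨L2.1, by rw [L2.2]; exact Set.ncard_singleton v2⟩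
    · exact ⟨L3.1, by rw [L3.2]; exact Set.ncard_singleton v3⟩
    · exact ⟨L4.1, by rw [L4.2]; exact Set.ncard_singleton v4⟩
  have hcard : ({w1, w2, w3, w4} : Set _).ncard = 4 := by
    rw [Set.ncard_insert_of_notMem (by simp [hne12, hne13, hne14]),
        Set.ncard_insert_of_notMem (by simp [hne23, hne24]),
        Set.ncard_pair hne34]
  have := Set.ncard_le_ncard hsub (Set.toFinite _)
  omega
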